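/- For G ∈ (0,1) with G ≠ 1/2, as N → ∞ the Bonferroni index 𝓑(p^{(N,G)}) = (N/(N−1))·∑_{k=2}^{N} 1/(k(k+1/G−2)) converges to (G/(2G−1))·(1 − H_{1/G−1}), where H_x = ψ(x+1) + γ is the generalized harmonic number expressed via the digamma function ψ and Euler's constant γ. -/
import Mathlib


open Finset Real Filter

/-- Coefficient a_N(G) of the Gini-stable process. -/
noncomputable def giniA (G : ℝ) (N : ℕ) : ℝ :=
  (1 - G) / ((N : ℝ) * (G * ((N : ℝ) - 2) + 1))

/-- Coefficient b_N(G) of the Gini-stable process. -/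
noncomputable def giniB (G : ℝ) (N : ℕ) : ℝ :=
  G * ((N : ℝ) - 1) / (G * ((N : ℝ) - 2) + 1)

/-- Entries p_k^{(N,G)} of the Gini-stable process (1-indexed in k). -/
noncomputable def giniP (G : ℝ) : ℕ → ℕ → ℝ
  | 0, _ => 0
  | 1, k => if k = 1 then 1 else 0
  | N + 2, k =>
      giniA G (N + 2) + giniB G (N + 2) * (if k ≤ N + 1 then giniP G (N + 1) k else 0)

/-- Harmonic number H_m = ∑_{i=1}^m 1/i, with H 0 = 0. -/
noncomputable def H (m : ℕ) : ℝ := ∑ i ∈ Finset.range m, (1 : ℝ) / (i + 1)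

/-- Generalized harmonic number H_c = ψ(c+1) + γ, expressed through the classical
partial-fraction identity H_c = ∑_{k=1}^∞ (1/k − 1/(k+c)). -/
noncomputable def Hgen (c : ℝ) : ℝ := ∑' k : ℕ, ((1 : ℝ) / (k + 1) - 1 / ((k : ℝ) + 1 + c))

theorem stmt13 (G : ℝ) (hG0 : 0 < G) (hG1 : G < 1) (hG : G ≠ 1/2) :
    Filter.Tendsto
      (fun N : ℕ => ((N : ℝ) / ((N : ℝ) - 1)) *
        ∑ k ∈ Finset.Icc 2 N, (1 : ℝ) / ((k : ℝ) * ((k : ℝ) + 1 / G - 2)))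
      Filter.atTop (nhds ((G / (2 * G - 1)) * (1 - Hgen (1 / G - 1)))) := by
  have hGne : G ≠ 0 := ne_of_gt hG0
  set c : ℝ := 1 / G - 2 with hc
  clear_value c
  have hg1 : (1:ℝ) < 1 / G := one_lt_one_div hG0 hG1
  have hcgt : -1 < c := by rw [hc]; linarith
  have h2G : 2 * G - 1 ≠ 0 := by
    intro h; apply hG; linarith
  have hc0 : c ≠ 0 := by
    rw [hc]
    intro h
    apply hG
    have : 1 / G = 2 := by linarith
    field_simp at this
    linarith
  set h1 : ℕ → ℝ := fun j => 1/((j:ℝ)+1) - 1/((j:ℝ)+2+c) with hh1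
  have hpos : ∀ j : ℕ, (0:ℝ) < (j:ℝ)+2+c := by
    intro j
    have : (0:ℝ) ≤ (j:ℝ) := Nat.cast_nonneg j
    linarith
  -- summability of h1
  have hsum1 : Summable h1 := by
    apply Summable.of_nonneg_of_le (f := fun j : ℕ => (1+c) * (1/((j:ℝ)+1)^2))
    · intro j
      have hj1 : (0:ℝ) < (j:ℝ)+1 := by positivity
      have hle : (j:ℝ)+1 ≤ (j:ℝ)+2+c := by linarith
      have := one_div_le_one_div_of_le hj1 hle
      simp only [hh1]
      linarith
    · intro j
      have hj1 : (0:ℝ) < (j:ℝ)+1 := by positivity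
      have hj2 : (0:ℝ) < (j:ℝ)+2+c := hpos j
      have e : h1 j = (1+c)/(((j:ℝ)+1)*((j:ℝ)+2+c)) := by
        simp only [hh1]
        rw [div_sub_div _ _ hj1.ne' hj2.ne']
        congr 1
        ring
      rw [e]
      have e2 : (1+c) * (1/((j:ℝ)+1)^2) = (1+c)/(((j:ℝ)+1)*((j:ℝ)+1)) := by
        rw [mul_one_div, sq]
      rw [e2]
      apply div_le_div_of_nonneg_left (by linarith) (by positivity)
      nlinarith
    · apply Summable.mul_left
      have base : Summable (fun n : ℕ => 1/((n:ℝ))^2) :=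
        Real.summable_one_div_nat_pow.2 one_lt_two
      have := (summable_nat_add_iff (f := fun n : ℕ => 1/((n:ℝ))^2) 1).2 base
      apply this.congr
      intro j
      push_cast
      ring
  -- Hgen (1/G-1) is the tsum of h1
  have hH : Hgen (1/G - 1) = ∑' j, h1 j := by
    unfold Hgen
    apply tsum_congr
    intro k
    simp only [hh1]
    have : (k:ℝ)+1+(1/G-1) = (k:ℝ)+2+c := by rw [hc]; ring
    rw [this]
  -- limits of the pieces
  have hT1 : Tendsto (fun N : ℕ => ∑ j ∈ Finset.range (N-1), h1 j) atTop
      (nhds (∑' j, h1 j)) :=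
    hsum1.hasSum.tendsto_sum_nat.comp (Filter.tendsto_sub_atTop_nat 1)
  have hinner : Tendsto (fun N : ℕ =>
      (1/c) * (∑ j ∈ Finset.range (N-1), h1 j - (1 - 1/(N:ℝ)))) atTop
      (nhds ((1/c) * (∑' j, h1 j - 1))) := by
    apply Tendsto.const_mul
    apply Tendsto.sub hT1
    have h0 : Tendsto (fun N : ℕ => 1 - 1/(N:ℝ)) atTop (nhds (1 - 0)) :=
      tendsto_const_nhds.sub tendsto_one_div_atTop_nhds_zero_nat
    simpa using h0
  -- the algebraic identity for N ≥ 2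
  have hid : ∀ N : ℕ, 2 ≤ N →
      ∑ k ∈ Finset.Icc 2 N, (1:ℝ)/((k:ℝ)*((k:ℝ)+1/G-2)) =
      (1/c) * (∑ j ∈ Finset.range (N-1), h1 j - (1 - 1/(N:ℝ))) := by
    intro N hN
    have hsub : ∑ j ∈ Finset.range (N-1), ((1:ℝ)/((j:ℝ)+1) - 1/((j:ℝ)+2)) =
        1 - 1/(N:ℝ) := by
      have h := Finset.sum_range_sub' (fun i : ℕ => (1:ℝ)/((i:ℝ)+1)) (N-1)
      have e : ∀ j ∈ Finset.range (N-1),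
          ((1:ℝ)/((j:ℝ)+1) - 1/((j:ℝ)+2)) =
          (fun i : ℕ => (1:ℝ)/((i:ℝ)+1)) j - (fun i : ℕ => (1:ℝ)/((i:ℝ)+1)) (j+1) := by
        intro j _
        push_cast
        ring_nf
      rw [Finset.sum_congr rfl e, h]
      have hcast : ((N-1:ℕ):ℝ) = (N:ℝ) - 1 := by
        have : (1:ℕ) ≤ N := by omega
        push_cast [Nat.cast_sub this]
        ring
      rw [hcast]
      norm_num
    rw [← Finset.Ico_add_one_right_eq_Icc, Finset.sum_Ico_eq_sum_range]
    have hr : N + 1 - 2 = N - 1 := by omega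
    rw [hr, ← hsub, ← Finset.sum_sub_distrib, Finset.mul_sum]
    apply Finset.sum_congr rfl
    intro i _
    have hi2 : ((2+i:ℕ):ℝ) = (i:ℝ) + 2 := by push_cast; ring
    rw [hi2]
    have h1G : 1/G = c + 2 := by rw [hc]; ring
    rw [h1G]
    simp only [hh1]
    have hp1 : (0:ℝ) < (i:ℝ)+1 := by positivity
    have hp2 : (0:ℝ) < (i:ℝ)+2 := by positivity
    have hp3 : (0:ℝ) < (i:ℝ)+2+c := hpos i
    have hD : ((i:ℝ)+2)*((i:ℝ)+2+c) ≠ 0 := (mul_pos hp2 hp3).ne'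
    have e1 : (1/((i:ℝ)+1) - 1/((i:ℝ)+2+c)) - (1/((i:ℝ)+1) - 1/((i:ℝ)+2)) =
        1/((i:ℝ)+2) - 1/((i:ℝ)+2+c) := by ring
    rw [e1, div_sub_div _ _ hp2.ne' hp3.ne', div_mul_div_comm, one_mul,
      show ((i:ℝ)+2)+(c+2)-2 = (i:ℝ)+2+c from by ring,
      div_eq_div_iff hD (mul_ne_zero hc0 hD)]
    ring
  have hmain : Tendsto (fun N : ℕ =>
      ∑ k ∈ Finset.Icc 2 N, (1:ℝ)/((k:ℝ)*((k:ℝ)+1/G-2))) atTop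
      (nhds ((1/c) * (∑' j, h1 j - 1))) := by
    apply hinner.congr'
    filter_upwards [eventually_ge_atTop 2] with N hN
    exact (hid N hN).symm
  have hpre : Tendsto (fun N : ℕ => (N:ℝ)/((N:ℝ)-1)) atTop (nhds 1) := by
    have h0 : Tendsto (fun N : ℕ => 1/(1 - 1/(N:ℝ))) atTop (nhds (1/(1-0))) :=
      tendsto_const_nhds.div
        (tendsto_const_nhds.sub tendsto_one_div_atTop_nhds_zero_nat) (by norm_num)
    have h0' : Tendsto (fun N : ℕ => 1/(1 - 1/(N:ℝ))) atTop (nhds 1) := by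
      simpa using h0
    apply h0'.congr'
    filter_upwards [eventually_ge_atTop 2] with N hN
    have hN2 : (2:ℝ) ≤ (N:ℝ) := by exact_mod_cast hN
    have hNne : (N:ℝ) ≠ 0 := by linarith
    have hN1 : (N:ℝ) - 1 ≠ 0 := by linarith
    field_simp
  have hfinal := hpre.mul hmain
  have heq : 1 * ((1/c) * (∑' j, h1 j - 1)) =
      (G / (2 * G - 1)) * (1 - Hgen (1 / G - 1)) := by
    rw [hH]
    have hcG : c * G = 1 - 2*G := by
      rw [hc, sub_mul, one_div, inv_mul_cancel₀ hGne]
    have h1c : 1/c = -G/(2*G-1) := by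
      rw [div_eq_div_iff hc0 h2G]
      linear_combination hcG
    rw [h1c]
    ring
  rw [heq] at hfinal
  exact hfinal
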